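/- Let H be an M×K complex matrix with HᴴH invertible, u ∈ ℂ^K nonzero, γ > 0, and set b = √γ · H(HᴴH)⁻¹u and x_δ = (HHᴴ + δ I_M)⁻¹ HHᴴ b for δ > 0. Then the map δ ↦ x_δᴴ x_δ is continuous and strictly decreasing on (0, ∞), tends to bᴴb as δ → 0⁺ and to 0 as δ → ∞. Consequently, if 0 < P_a < bᴴb, there exists a unique δ* > 0 such that x_{δ*}ᴴ x_{δ*} = P_a. -/

import Mathlib

open Matrix

/-- Squared Euclidean (ℓ²) norm of a complex vector. -/
noncomputable def sqNorm {n : ℕ} (v : Fin n → ℂ) : ℝ := ∑ i, ‖v i‖ ^ 2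

/-- The zero-forcing vector `b = √γ · H (Hᴴ H)⁻¹ u`. -/
noncomputable def bVec {M K : ℕ} (H : Matrix (Fin M) (Fin K) ℂ) (u : Fin K → ℂ) (γ : ℝ) :
    Fin M → ℂ :=
  ((Real.sqrt γ : ℂ)) • (H * (Hᴴ * H)⁻¹).mulVec u

/-- The regularized zero-forcing vector `x_δ = (H Hᴴ + δ I)⁻¹ (H Hᴴ) b`. -/
noncomputable def xVec {M K : ℕ} (H : Matrix (Fin M) (Fin K) ℂ) (u : Fin K → ℂ) (γ δ : ℝ) :
    Fin M → ℂ :=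
  (((H * Hᴴ + (δ : ℂ) • (1 : Matrix (Fin M) (Fin M) ℂ))⁻¹) * (H * Hᴴ)).mulVec (bVec H u γ)

/-! ### Auxiliary real-analytic facts -/

noncomputable def gFun {n : ℕ} (lam w : Fin n → ℝ) (δ : ℝ) : ℝ :=
  ∑ i, (lam i / (lam i + δ)) ^ 2 * w i

lemma gFun_continuousOn {n : ℕ} (lam w : Fin n → ℝ) (hlam : ∀ i, 0 ≤ lam i) :
    ContinuousOn (gFun lam w) (Set.Ioi 0) := by
  apply continuousOn_finset_sum
  intro i _
  apply ContinuousOn.mul _ continuousOn_const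
  apply ContinuousOn.pow
  apply ContinuousOn.div continuousOn_const (by fun_prop)
  intro δ hδ
  have := hlam i
  have : (0:ℝ) < δ := hδ
  positivity

lemma gFun_strictAntiOn {n : ℕ} (lam w : Fin n → ℝ) (hlam : ∀ i, 0 ≤ lam i)
    (hw : ∀ i, 0 ≤ w i) (hex : ∃ i, 0 < lam i ∧ 0 < w i) :
    StrictAntiOn (gFun lam w) (Set.Ioi 0) := by
  intro δ₁ h1 δ₂ h2 hlt
  have h1 : (0:ℝ) < δ₁ := h1
  have h2 : (0:ℝ) < δ₂ := h2
  apply Finset.sum_lt_sum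
  · intro i _
    have hl := hlam i
    have hle : lam i / (lam i + δ₂) ≤ lam i / (lam i + δ₁) :=
      div_le_div_of_nonneg_left hl (by linarith) (by linarith)
    have hnn : 0 ≤ lam i / (lam i + δ₂) := by positivity
    exact mul_le_mul_of_nonneg_right (pow_le_pow_left₀ hnn hle 2) (hw i)
  · obtain ⟨i, hli, hwi⟩ := hex
    refine ⟨i, Finset.mem_univ i, ?_⟩
    have hlt2 : lam i / (lam i + δ₂) < lam i / (lam i + δ₁) :=
      div_lt_div_of_pos_left hli (by linarith) (by linarith)
    have hnn : 0 ≤ lam i / (lam i + δ₂) := by positivity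
    exact mul_lt_mul_of_pos_right (pow_lt_pow_left₀ hlt2 hnn (by norm_num)) hwi

lemma gFun_tendsto_zero {n : ℕ} (lam w : Fin n → ℝ) (hlam : ∀ i, 0 ≤ lam i)
    (hzero : ∀ i, lam i = 0 → w i = 0) :
    Filter.Tendsto (gFun lam w) (nhdsWithin 0 (Set.Ioi 0)) (nhds (∑ i, w i)) := by
  apply tendsto_finset_sum
  intro i _
  rcases eq_or_lt_of_le (hlam i) with h | h
  · have hw := hzero i h.symm
    rw [hw]
    simp
  · have hcont : ContinuousAt (fun δ : ℝ => (lam i / (lam i + δ)) ^ 2 * w i) 0 := by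
      apply ContinuousAt.mul _ continuousAt_const
      apply ContinuousAt.pow
      apply ContinuousAt.div continuousAt_const (by fun_prop)
      simpa using h.ne'
    have := hcont.continuousWithinAt (s := Set.Ioi 0)
    simpa [ContinuousWithinAt, div_self h.ne'] using this

lemma gFun_tendsto_atTop {n : ℕ} (lam w : Fin n → ℝ) :
    Filter.Tendsto (gFun lam w) Filter.atTop (nhds 0) := by
  have h0 : (0:ℝ) = ∑ _i : Fin n, 0 := by simp
  rw [h0]
  apply tendsto_finset_sum
  intro i _
  have hdiv : Filter.Tendsto (fun δ : ℝ => lam i / (lam i + δ)) Filter.atTop (nhds 0) := by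
    apply Filter.Tendsto.div_atTop tendsto_const_nhds
    exact Filter.tendsto_atTop_add_const_left _ _ Filter.tendsto_id
  simpa using ((hdiv.pow 2).mul_const (w i))

/-! ### Auxiliary linear-algebra facts -/

lemma sqNorm_coe {n : ℕ} (v : Fin n → ℂ) : (sqNorm v : ℂ) = star v ⬝ᵥ v := by
  simp only [sqNorm, dotProduct, Pi.star_apply, Complex.ofReal_sum]
  refine Finset.sum_congr rfl fun i _ => ?_
  rw [Complex.star_def, mul_comm, Complex.mul_conj, Complex.normSq_eq_norm_sq]

lemma sqNorm_mulVec {n : ℕ} (W : Matrix (Fin n) (Fin n) ℂ) (hW : star W * W = 1)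
    (v : Fin n → ℂ) : sqNorm (W *ᵥ v) = sqNorm v := by
  have : (sqNorm (W *ᵥ v) : ℂ) = (sqNorm v : ℂ) := by
    rw [sqNorm_coe, sqNorm_coe, star_mulVec, dotProduct_mulVec, vecMul_vecMul,
      ← Matrix.star_eq_conjTranspose, hW, vecMul_one]
  exact_mod_cast this

lemma sqNorm_eq_zero_iff {n : ℕ} (v : Fin n → ℂ) : sqNorm v = 0 ↔ v = 0 := by
  rw [sqNorm]
  constructor
  · intro h
    funext i
    have hnn : ∀ j ∈ Finset.univ, (0:ℝ) ≤ ‖v j‖ ^ 2 := fun j _ => by positivity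
    have := (Finset.sum_eq_zero_iff_of_nonneg hnn).mp h i (Finset.mem_univ i)
    simpa using this
  · intro h; simp [h]

lemma sqNorm_nonneg {n : ℕ} (v : Fin n → ℂ) : 0 ≤ sqNorm v :=
  Finset.sum_nonneg fun i _ => by positivity

lemma sandwich_mul {n : ℕ} (U P Q : Matrix (Fin n) (Fin n) ℂ) (h : star U * U = 1) :
    (U * P * star U) * (U * Q * star U) = U * (P * Q) * star U := by
  simp only [Matrix.mul_assoc]
  rw [← Matrix.mul_assoc (star U) U, h, Matrix.one_mul]

lemma row_zero_of_lam_zero {M K : ℕ} (B : Matrix (Fin M) (Fin K) ℂ) (lam : Fin M → ℝ)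
    (hBB : B * Bᴴ = diagonal fun i => ((lam i : ℝ) : ℂ)) (i : Fin M) (hi : lam i = 0) :
    ∀ j, B i j = 0 := by
  have hdiag : (B * Bᴴ) i i = 0 := by
    rw [hBB, diagonal_apply_eq, hi, Complex.ofReal_zero]
  have hsum : (∑ j, (Complex.normSq (B i j) : ℂ)) = 0 := by
    rw [← hdiag, Matrix.mul_apply]
    refine Finset.sum_congr rfl fun j _ => ?_
    rw [conjTranspose_apply, Complex.star_def, Complex.mul_conj]
  have hsum' : (∑ j, Complex.normSq (B i j)) = 0 := by
    exact_mod_cast (Complex.ofReal_sum Finset.univ (fun j => Complex.normSq (B i j))) ▸ hsum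
  intro j
  have := (Finset.sum_eq_zero_iff_of_nonneg
    (fun j _ => Complex.normSq_nonneg (B i j))).mp hsum' j (Finset.mem_univ j)
  exact Complex.normSq_eq_zero.mp this

/-- The central bridge: diagonalizing `A = H Hᴴ`. -/
lemma bridge {M : ℕ} (A U : Matrix (Fin M) (Fin M) ℂ) (lam : Fin M → ℝ)
    (hU1 : U * star U = 1) (hU2 : star U * U = 1)
    (hspec : A = U * diagonal (fun i => ((lam i : ℝ) : ℂ)) * star U)
    (hlam : ∀ i, 0 ≤ lam i) (b : Fin M → ℂ) (δ : ℝ) (hδ : 0 < δ) :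
    sqNorm (((A + (δ:ℂ) • 1)⁻¹ * A) *ᵥ b)
      = gFun lam (fun i => ‖(star U *ᵥ b) i‖ ^ 2) δ := by
  have hne : ∀ i, ((lam i + δ : ℝ) : ℂ) ≠ 0 := fun i =>
    Complex.ofReal_ne_zero.mpr (by have := hlam i; linarith)
  have hsum : A + (δ:ℂ) • 1 = U * diagonal (fun i => ((lam i + δ : ℝ) : ℂ)) * star U := by
    have hD : diagonal (fun i => ((lam i + δ : ℝ) : ℂ))
        = diagonal (fun i => ((lam i : ℝ) : ℂ)) + (δ:ℂ) • (1 : Matrix (Fin M) (Fin M) ℂ) := by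
      rw [smul_one_eq_diagonal, diagonal_add]
      congr 1; funext i; push_cast; ring
    rw [hD, Matrix.mul_add, Matrix.add_mul, ← hspec]
    congr 1
    rw [Matrix.mul_smul, Matrix.mul_one, Matrix.smul_mul, hU1]
  have hinv : (A + (δ:ℂ) • 1)⁻¹ = U * diagonal (fun i => ((lam i + δ : ℝ) : ℂ)⁻¹) * star U := by
    apply inv_eq_right_inv
    rw [hsum, sandwich_mul _ _ _ hU2, diagonal_mul_diagonal]
    have h1 : (diagonal fun i => ((lam i + δ : ℝ) : ℂ) * ((lam i + δ : ℝ) : ℂ)⁻¹)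
        = (1 : Matrix (Fin M) (Fin M) ℂ) := by
      have he : (fun i => ((lam i + δ : ℝ) : ℂ) * ((lam i + δ : ℝ) : ℂ)⁻¹)
          = fun _ => (1:ℂ) := funext fun i => mul_inv_cancel₀ (hne i)
      rw [he, diagonal_one]
    rw [h1, Matrix.mul_one, hU1]
  have hprod : (A + (δ:ℂ) • 1)⁻¹ * A
      = U * diagonal (fun i => ((lam i / (lam i + δ) : ℝ) : ℂ)) * star U := by
    rw [hinv]
    conv_lhs => rw [hspec]
    rw [sandwich_mul _ _ _ hU2, diagonal_mul_diagonal]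
    have he : (fun i => ((lam i + δ : ℝ) : ℂ)⁻¹ * ((lam i : ℝ) : ℂ))
        = fun i => ((lam i / (lam i + δ) : ℝ) : ℂ) := by
      funext i
      rw [Complex.ofReal_div, div_eq_inv_mul]
    rw [he]
  rw [hprod, ← mulVec_mulVec, ← mulVec_mulVec, sqNorm_mulVec U hU2]
  rw [sqNorm, gFun]
  refine Finset.sum_congr rfl fun i _ => ?_
  rw [mulVec_diagonal, norm_mul, mul_pow, Complex.norm_real, Real.norm_eq_abs, sq_abs]

/-- Main auxiliary lemma: spectral decomposition of the power map. -/
lemma stmt1_aux {M K : ℕ} (H : Matrix (Fin M) (Fin K) ℂ) (b : Fin M → ℂ)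
    (hb : b ≠ 0) (hbH : ∃ v : Fin K → ℂ, b = H *ᵥ v) :
    ∃ lam w : Fin M → ℝ,
      (∀ i, 0 ≤ lam i) ∧ (∀ i, 0 ≤ w i) ∧ (∀ i, lam i = 0 → w i = 0) ∧
      (∃ i, 0 < lam i ∧ 0 < w i) ∧ (∑ i, w i = sqNorm b) ∧
      ∀ δ : ℝ, 0 < δ →
        sqNorm ((((H * Hᴴ + (δ:ℂ) • 1)⁻¹) * (H * Hᴴ)) *ᵥ b) = gFun lam w δ := by
  classical
  have hA : (H * Hᴴ).IsHermitian := isHermitian_mul_conjTranspose_self H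
  set U : Matrix (Fin M) (Fin M) ℂ := (hA.eigenvectorUnitary : Matrix (Fin M) (Fin M) ℂ)
    with hUdef
  have hU1 : U * star U = 1 := mem_unitaryGroup_iff.mp hA.eigenvectorUnitary.2
  have hU2 : star U * U = 1 := mem_unitaryGroup_iff'.mp hA.eigenvectorUnitary.2
  set lam : Fin M → ℝ := hA.eigenvalues with hlamdef
  have hlam : ∀ i, 0 ≤ lam i := eigenvalues_self_mul_conjTranspose_nonneg H
  have hspec : H * Hᴴ = U * diagonal (fun i => ((lam i : ℝ) : ℂ)) * star U :=
    hA.spectral_theorem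
  set c : Fin M → ℂ := star U *ᵥ b with hcdef
  have hBB : (star U * H) * (star U * H)ᴴ = diagonal fun i => ((lam i : ℝ) : ℂ) := by
    have h : star U * (H * Hᴴ) * U = diagonal fun i => ((lam i : ℝ) : ℂ) := by
      have h' := hA.conjStarAlgAut_star_eigenvectorUnitary
      rw [Unitary.conjStarAlgAut_apply] at h'
      simpa [hUdef, hlamdef, Function.comp_def] using h'
    simp only [Matrix.mul_assoc] at h ⊢
    simp only [conjTranspose_mul, Matrix.star_eq_conjTranspose,
      conjTranspose_conjTranspose, Matrix.mul_assoc]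
    exact h
  have hczero : ∀ i, lam i = 0 → c i = 0 := by
    intro i hi
    obtain ⟨v, hv⟩ := hbH
    have hrow := row_zero_of_lam_zero (star U * H) lam hBB i hi
    rw [hcdef, hv, mulVec_mulVec]
    simp [mulVec, dotProduct, hrow]
  refine ⟨lam, fun i => ‖c i‖ ^ 2, hlam, fun i => by positivity,
    fun i hi => by show ‖c i‖ ^ 2 = 0; rw [hczero i hi]; simp, ?_, ?_,
    fun δ hδ => bridge (H * Hᴴ) U lam hU1 hU2 hspec hlam b δ hδ⟩
  · -- existence of an index with positive eigenvalue and weight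
    have hcne : c ≠ 0 := by
      intro hc0
      apply hb
      have : sqNorm b = 0 := by
        rw [← sqNorm_mulVec (star U) (by rw [star_star, hU1]) b, ← hcdef, hc0,
          sqNorm_eq_zero_iff]
      exact (sqNorm_eq_zero_iff b).mp this
    have hpos : 0 < ∑ i, ‖c i‖ ^ 2 := by
      have hne : sqNorm c ≠ 0 := fun h => hcne ((sqNorm_eq_zero_iff c).mp h)
      have := sqNorm_nonneg c
      rw [sqNorm] at *
      exact lt_of_le_of_ne this (Ne.symm hne)
    have h0 : (∑ _i : Fin M, (0:ℝ)) < ∑ i, ‖c i‖ ^ 2 := by simpa using hpos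
    obtain ⟨i, -, hi⟩ := Finset.exists_lt_of_sum_lt h0
    refine ⟨i, ?_, hi⟩
    rcases eq_or_lt_of_le (hlam i) with h | h
    · exfalso
      have := hczero i h.symm
      rw [this] at hi
      simpa using hi
    · exact h
  · rw [← sqNorm_mulVec (star U) (by rw [star_star, hU1]) b, ← hcdef, sqNorm]

/-- the power map `δ ↦ x_δᴴ x_δ` is continuous and strictly decreasing
on `(0, ∞)`, tends to `bᴴ b` as `δ → 0⁺` and to `0` as `δ → ∞`; consequently, for any
`0 < P_a < bᴴ b` there is a unique `δ* > 0` with `x_{δ*}ᴴ x_{δ*} = P_a`. -/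
theorem stmt1 {M K : ℕ} (hM : 0 < M) (hK : 0 < K)
    (H : Matrix (Fin M) (Fin K) ℂ) (hH : IsUnit (Hᴴ * H))
    (u : Fin K → ℂ) (hu : u ≠ 0) (γ : ℝ) (hγ : 0 < γ) :
    ContinuousOn (fun δ : ℝ => sqNorm (xVec H u γ δ)) (Set.Ioi 0) ∧
    StrictAntiOn (fun δ : ℝ => sqNorm (xVec H u γ δ)) (Set.Ioi 0) ∧
    Filter.Tendsto (fun δ : ℝ => sqNorm (xVec H u γ δ)) (nhdsWithin 0 (Set.Ioi 0))
      (nhds (sqNorm (bVec H u γ))) ∧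
    Filter.Tendsto (fun δ : ℝ => sqNorm (xVec H u γ δ)) Filter.atTop (nhds 0) ∧
    ∀ Pa : ℝ, 0 < Pa → Pa < sqNorm (bVec H u γ) →
      ∃! δ : ℝ, 0 < δ ∧ sqNorm (xVec H u γ δ) = Pa := by
  classical
  have hγ' : ((Real.sqrt γ : ℝ) : ℂ) ≠ 0 :=
    Complex.ofReal_ne_zero.mpr (Real.sqrt_pos.mpr hγ).ne'
  have hdet : IsUnit (Hᴴ * H).det := (Matrix.isUnit_iff_isUnit_det _).mp hH
  have hmulinv : (Hᴴ * H) * (Hᴴ * H)⁻¹ = 1 := Matrix.mul_nonsing_inv _ hdet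
  have hb : bVec H u γ ≠ 0 := by
    intro h0
    have hHb : Hᴴ *ᵥ bVec H u γ = ((Real.sqrt γ : ℝ) : ℂ) • u := by
      rw [bVec, mulVec_smul, mulVec_mulVec, ← Matrix.mul_assoc, hmulinv, Matrix.one_mulVec]
    rw [h0, mulVec_zero] at hHb
    exact hu ((smul_eq_zero.mp hHb.symm).resolve_left hγ')
  have hbH : ∃ v : Fin K → ℂ, bVec H u γ = H *ᵥ v := by
    refine ⟨((Real.sqrt γ : ℝ) : ℂ) • ((Hᴴ * H)⁻¹ *ᵥ u), ?_⟩
    rw [bVec, mulVec_smul, mulVec_mulVec]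
  obtain ⟨lam, w, hlam, hw, hzero, hex, hsumw, hkey⟩ := stmt1_aux H (bVec H u γ) hb hbH
  have key : ∀ δ ∈ Set.Ioi (0:ℝ), sqNorm (xVec H u γ δ) = gFun lam w δ :=
    fun δ hδ => hkey δ hδ
  have hanti := gFun_strictAntiOn lam w hlam hw hex
  have hanti' : StrictAntiOn (fun δ : ℝ => sqNorm (xVec H u γ δ)) (Set.Ioi 0) := by
    intro a ha b hb hab
    show sqNorm (xVec H u γ b) < sqNorm (xVec H u γ a)
    rw [key a ha, key b hb]
    exact hanti ha hb hab
  have ht0 : Filter.Tendsto (fun δ : ℝ => sqNorm (xVec H u γ δ)) (nhdsWithin 0 (Set.Ioi 0))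
      (nhds (sqNorm (bVec H u γ))) := by
    have h := gFun_tendsto_zero lam w hlam hzero
    rw [hsumw] at h
    refine Filter.Tendsto.congr' ?_ h
    filter_upwards [eventually_mem_nhdsWithin] with δ hδ
    exact (key δ hδ).symm
  have htop : Filter.Tendsto (fun δ : ℝ => sqNorm (xVec H u γ δ)) Filter.atTop (nhds 0) := by
    refine Filter.Tendsto.congr' ?_ (gFun_tendsto_atTop lam w)
    filter_upwards [Filter.eventually_gt_atTop 0] with δ hδ
    exact (key δ hδ).symm
  refine ⟨(gFun_continuousOn lam w hlam).congr (fun δ hδ => key δ hδ), hanti', ht0, htop, ?_⟩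
  intro Pa hPa0 hPab
  have h0 := gFun_tendsto_zero lam w hlam hzero
  rw [hsumw] at h0
  obtain ⟨δ₀, hδ₀Pa, hδ₀pos⟩ :=
    ((h0.eventually (eventually_gt_nhds hPab)).and eventually_mem_nhdsWithin).exists
  have hδ₀pos' : (0:ℝ) < δ₀ := hδ₀pos
  obtain ⟨δ₁, hδ₁Pa, hδ₁gt⟩ :=
    (((gFun_tendsto_atTop lam w).eventually (eventually_lt_nhds hPa0)).and
      (Filter.eventually_gt_atTop δ₀)).exists
  have hsub : Set.Icc δ₀ δ₁ ⊆ Set.Ioi 0 := fun x hx => lt_of_lt_of_le hδ₀pos' hx.1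
  have hivt := intermediate_value_Icc' (le_of_lt hδ₁gt)
    ((gFun_continuousOn lam w hlam).mono hsub)
  obtain ⟨δs, hδsmem, hgδs⟩ := hivt ⟨hδ₁Pa.le, hδ₀Pa.le⟩
  have hδspos : (0:ℝ) < δs := lt_of_lt_of_le hδ₀pos' hδsmem.1
  have hδsIoi : δs ∈ Set.Ioi (0:ℝ) := hδspos
  refine ⟨δs, ⟨hδspos, by rw [key δs hδsIoi]; exact hgδs⟩, ?_⟩
  rintro y ⟨hy, hgy⟩
  have hyIoi : y ∈ Set.Ioi (0:ℝ) := hy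
  apply hanti.injOn hyIoi hδsIoi
  rw [key y hyIoi] at hgy
  rw [hgy]
  exact hgδs.symm
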